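/- If a nonzero abelian group $M$ is the inverse limit of a countable directed system of divisible abelian groups with surjective transition maps and at least one nonzero term, then $M$ contains a nonzero divisible subgroup. In particular, no nonzero finitely generated abelian group is such an inverse limit. -/
import Mathlib


universe u v

/-- The first uncountable ordinal `ω₁`, as a linearly ordered index type. -/
def Omega1 : Type 1 := {o : Ordinal.{0} // o < (Cardinal.aleph 1).ord}

noncomputable instance : LinearOrder Omega1 := by unfold Omega1; infer_instance

/-- The inverse limit of an inverse system of modules, realized as the submodule of the
direct product consisting of the compatible families. -/
def invLim {R : Type u} [Ring R] {ι : Type v} [Preorder ι] (P : ι → Type u)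
    [∀ i, AddCommGroup (P i)] [∀ i, Module R (P i)]
    (φ : ∀ i j : ι, i ≤ j → (P j →ₗ[R] P i)) : Submodule R (∀ i, P i) where
  carrier := {x | ∀ (i j : ι) (h : i ≤ j), φ i j h (x j) = x i}
  zero_mem' := by intro i j h; simp
  add_mem' := by intro a b ha hb i j h; simp [ha i j h, hb i j h]
  smul_mem' := by intro c a ha i j h; simp [ha i j h]

lemma mem_invLim {R : Type u} [Ring R] {ι : Type v} [Preorder ι] (P : ι → Type u)
    [∀ i, AddCommGroup (P i)] [∀ i, Module R (P i)]
    (φ : ∀ i j : ι, i ≤ j → (P j →ₗ[R] P i)) (x : ∀ i, P i) :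
    x ∈ invLim P φ ↔ ∀ (i j : ι) (h : i ≤ j), φ i j h (x j) = x i := Iff.rfl

def dfac (m k : ℕ) : ℕ := k.descFactorial (k - m)

lemma dfac_self (m : ℕ) : dfac m m = 1 := by simp [dfac]

lemma dfac_succ_top {m k : ℕ} (h : m ≤ k) : dfac m (k+1) = (k+1) * dfac m k := by
  unfold dfac
  rw [show k + 1 - m = (k - m) + 1 by omega, Nat.succ_descFactorial_succ]

lemma dfac_succ_bot {m k : ℕ} (h : m < k) : (m+1) * dfac (m+1) k = dfac m k := by
  unfold dfac
  rw [show k - m = (k - (m+1)) + 1 by omega, Nat.descFactorial_succ,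
    show k - (k - (m+1)) = m + 1 by omega]

lemma dvd_dfac (m : ℕ) {r : ℕ} (hr : r ≠ 0) : r ∣ dfac m (m + r) := by
  have h1 : r ∣ r.factorial := Nat.dvd_factorial (Nat.pos_of_ne_zero hr) le_rfl
  have h2 : r.factorial ∣ (m + r).descFactorial r := Nat.factorial_dvd_descFactorial _ _
  have h3 : dfac m (m + r) = (m + r).descFactorial r := by
    unfold dfac; rw [show m + r - m = r by omega]
  exact h3 ▸ h1.trans h2

lemma not_addGroupFG_of_divisible {A : Type} [AddCommGroup A]
    (hdiv : ∀ (n : ℤ), n ≠ 0 → Function.Surjective (fun y : A => n • y))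
    (y : A) (hy : y ≠ 0) : ¬ AddGroup.FG A := by
  intro hFG
  have hnt : Nontrivial A := nontrivial_of_ne y 0 hy
  have hfin : Module.Finite ℤ A := Module.Finite.iff_addGroup_fg.mpr hFG
  have hwf : WellFounded ((· > ·) : Submodule ℤ A → Submodule ℤ A → Prop) :=
    isNoetherian_iff.mp inferInstance
  have hS : ({W : Submodule ℤ A | W ≠ ⊤}).Nonempty := ⟨⊥, bot_ne_top⟩
  obtain ⟨W, hWne, hWmax⟩ := hwf.has_min _ hS
  obtain ⟨a₀, ha₀⟩ : ∃ a₀, a₀ ∉ W := by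
    by_contra hno; push_neg at hno
    exact hWne (Submodule.eq_top_iff'.mpr hno)
  set Q := A ⧸ W with hQ
  set q : Q := Submodule.Quotient.mk a₀ with hq
  have hq0 : q ≠ 0 := fun h => ha₀ ((Submodule.Quotient.mk_eq_zero W).mp h)
  have hspan : Submodule.span ℤ {q} = ⊤ := by
    have hWlt : W < W ⊔ Submodule.span ℤ {a₀} := by
      refine lt_of_le_of_ne le_sup_left (fun h => ha₀ ?_)
      have : a₀ ∈ W ⊔ Submodule.span ℤ {a₀} :=
        Submodule.mem_sup_right (Submodule.mem_span_singleton_self a₀)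
      rwa [← h] at this
    have htop : W ⊔ Submodule.span ℤ {a₀} = ⊤ := by
      by_contra hne; exact hWmax _ hne hWlt
    have hmap := congrArg (Submodule.map W.mkQ) htop
    rw [Submodule.map_sup, Submodule.map_top, Submodule.range_mkQ] at hmap
    have hmW : Submodule.map W.mkQ W = ⊥ := by
      refine eq_bot_iff.mpr ?_
      rintro x ⟨w, hw, rfl⟩
      exact (Submodule.Quotient.mk_eq_zero W).mpr hw
    rw [hmW, bot_sup_eq, Submodule.map_span, Set.image_singleton] at hmap
    exact hmap
  have hmem : ∀ z : Q, ∃ c : ℤ, c • q = z := by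
    intro z
    have : z ∈ Submodule.span ℤ {q} := hspan ▸ Submodule.mem_top
    exact Submodule.mem_span_singleton.mp this
  have hQdiv : ∀ (n : ℤ), n ≠ 0 → ∀ z : Q, ∃ u : Q, n • u = z := by
    intro n hn z
    obtain ⟨b, rfl⟩ := Submodule.Quotient.mk_surjective W z
    obtain ⟨u, hu⟩ := hdiv n hn b
    exact ⟨Submodule.Quotient.mk u, by rw [← Submodule.Quotient.mk_smul]; exact congrArg _ hu⟩
  obtain ⟨u, hu⟩ := hQdiv 2 two_ne_zero q
  obtain ⟨c, hc⟩ := hmem u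
  have hz : (2 * c - 1) • q = 0 := by
    rw [sub_smul, one_smul, mul_smul, hc, hu, sub_self]
  have hzne : (2 * c - 1 : ℤ) ≠ 0 := by omega
  obtain ⟨u', hu'⟩ := hQdiv (2 * c - 1) hzne q
  obtain ⟨c', hc'⟩ := hmem u'
  apply hq0
  calc q = (2*c-1) • u' := hu'.symm
    _ = (2*c-1) • (c' • q) := by rw [hc']
    _ = c' • ((2*c-1) • q) := by rw [smul_smul, smul_smul, mul_comm]
    _ = 0 := by rw [hz, smul_zero]

lemma exists_cofinal_chain {ι : Type} [Preorder ι] [IsDirected ι (· ≤ ·)] [Countable ι]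
    [Nonempty ι] (i₀ : ι) :
    ∃ j : ℕ → ι, Monotone j ∧ i₀ ≤ j 0 ∧ ∀ i, ∃ k, i ≤ j k := by
  obtain ⟨e, he⟩ := exists_surjective_nat ι
  have dir : ∀ a b : ι, ∃ c, a ≤ c ∧ b ≤ c := fun a b => directed_of (· ≤ ·) a b
  choose ub h1 h2 using dir
  let j : ℕ → ι := fun k => Nat.rec (ub i₀ (e 0)) (fun k jk => ub jk (e (k+1))) k
  have hstep : ∀ k, j k ≤ j (k+1) := fun k => h1 _ _
  refine ⟨j, monotone_nat_of_le_succ hstep, h1 _ _, ?_⟩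
  intro i
  obtain ⟨k, rfl⟩ := he i
  cases k with
  | zero => exact ⟨0, h2 _ _⟩
  | succ k => exact ⟨k+1, h2 _ _⟩

lemma invLim_lift {ι : Type} [Preorder ι] (M : ι → Type) [∀ i, AddCommGroup (M i)]
    (φ : ∀ i j : ι, i ≤ j → (M j →ₗ[ℤ] M i))
    (hφid : ∀ i, φ i i le_rfl = LinearMap.id)
    (hφcomp : ∀ (i j k : ι) (hij : i ≤ j) (hjk : j ≤ k),
      (φ i j hij).comp (φ j k hjk) = φ i k (hij.trans hjk))
    (hφsurj : ∀ (i j : ι) (h : i ≤ j), Function.Surjective (φ i j h))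
    (j : ℕ → ι) (hj : Monotone j) (hcof : ∀ i, ∃ k, i ≤ j k)
    (K : ℕ) (m0 : M (j K)) :
    ∃ w : ↥(invLim M φ), (w : ∀ i, M i) (j K) = m0 := by
  classical
  let y : (k : ℕ) → M (j (K + k)) := fun k => Nat.rec m0
    (fun k yk => Classical.choose (hφsurj (j (K+k)) (j (K+k+1)) (hj (Nat.le_succ _)) yk)) k
  have hy : ∀ k, φ (j (K+k)) (j (K+k+1)) (hj (Nat.le_succ _)) (y (k+1)) = y k :=
    fun k => Classical.choose_spec (hφsurj (j (K+k)) (j (K+k+1)) (hj (Nat.le_succ _)) (y k))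
  have hchain : ∀ k k' (h : k ≤ k'), φ (j (K+k)) (j (K+k')) (hj (by omega)) (y k') = y k := by
    intro k k' h
    induction k', h using Nat.le_induction with
    | base =>
      have := hφid (j (K+k))
      calc φ (j (K+k)) (j (K+k)) (hj (by omega)) (y k)
          = LinearMap.id (y k) := by rw [this]
        _ = y k := rfl
    | succ k' hkk' ih =>
      have hcomp := LinearMap.congr_fun
        (hφcomp (j (K+k)) (j (K+k')) (j (K+k'+1)) (hj (by omega)) (hj (Nat.le_succ _)))
        (y (k'+1))
      calc φ (j (K+k)) (j (K+(k'+1))) (hj (by omega)) (y (k'+1))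
          = φ (j (K+k)) (j (K+k')) (hj (by omega))
              (φ (j (K+k')) (j (K+k'+1)) (hj (Nat.le_succ _)) (y (k'+1))) := hcomp.symm
        _ = φ (j (K+k)) (j (K+k')) (hj (by omega)) (y k') := by rw [hy k']
        _ = y k := ih
  let c : ι → ℕ := fun i => Classical.choose (hcof i)
  have hc : ∀ i, i ≤ j (c i) := fun i => Classical.choose_spec (hcof i)
  have hle : ∀ i, i ≤ j (K + c i) := fun i => (hc i).trans (hj (by omega))
  let w : ∀ i, M i := fun i => φ i (j (K + c i)) (hle i) (y (c i))
  have hw1 : ∀ (i : ι) (k : ℕ) (hik : i ≤ j (K + k)), c i ≤ k →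
      φ i (j (K + k)) hik (y k) = w i := by
    intro i k hik hk
    have hch := hchain (c i) k hk
    have hcomp := LinearMap.congr_fun
      (hφcomp i (j (K + c i)) (j (K + k)) (hle i) (hj (by omega))) (y k)
    calc φ i (j (K + k)) hik (y k)
        = φ i (j (K + c i)) (hle i) (φ (j (K + c i)) (j (K + k)) (hj (by omega)) (y k)) :=
          hcomp.symm
      _ = φ i (j (K + c i)) (hle i) (y (c i)) := by rw [hch]
      _ = w i := rfl
  have hwmem : w ∈ invLim M φ := by
    rw [mem_invLim]
    intro i i' h
    set s := max (c i) (c i') with hs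
    have hi : i ≤ j (K + s) := (hc i).trans (hj (by omega))
    have hi' : i' ≤ j (K + s) := (hc i').trans (hj (by omega))
    have h1 := hw1 i' s hi' (le_max_right _ _)
    have h2 := hw1 i s hi (le_max_left _ _)
    rw [← h1, ← h2]
    exact LinearMap.congr_fun (hφcomp i i' (j (K + s)) h hi') (y s)
  have hval : w (j K) = m0 := by
    have h0 := hw1 (j K) (c (j K)) (hle (j K)) le_rfl
    have hch := hchain 0 (c (j K)) (Nat.zero_le _)
    rw [← h0]
    exact hch
  exact ⟨⟨w, hwmem⟩, hval⟩

/-- If a nonzero abelian group is the inverse limit of a countable directed system of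
divisible abelian groups with surjective transition maps and at least one nonzero term,
then it contains a nonzero divisible subgroup; in particular it is not a (nonzero)
finitely generated abelian group. -/
theorem invLim_divisible_contains_divisible (ι : Type) [Preorder ι] [IsDirected ι (· ≤ ·)]
    [Countable ι] [Nonempty ι]
    (M : ι → Type) [∀ i, AddCommGroup (M i)]
    (φ : ∀ i j : ι, i ≤ j → (M j →ₗ[ℤ] M i))
    (hφid : ∀ i, φ i i le_rfl = LinearMap.id)
    (hφcomp : ∀ (i j k : ι) (hij : i ≤ j) (hjk : j ≤ k),
      (φ i j hij).comp (φ j k hjk) = φ i k (hij.trans hjk))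
    (hdiv : ∀ (i : ι) (n : ℤ), n ≠ 0 → Function.Surjective (fun y : M i => n • y))
    (hφsurj : ∀ (i j : ι) (h : i ≤ j), Function.Surjective (φ i j h))
    (hM : Nontrivial ↥(invLim M φ))
    (hterm : ∃ (a : ι) (y : M a), y ≠ 0) :
    (∃ D : AddSubgroup ↥(invLim M φ), D ≠ ⊥ ∧
      ∀ (n : ℤ), n ≠ 0 → ∀ x ∈ D, ∃ y ∈ D, n • y = x) ∧
    ¬ AddGroup.FG ↥(invLim M φ) := by
  classical
  obtain ⟨g, hg⟩ := exists_ne (0 : ↥(invLim M φ))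
  have hg1 : g.1 ≠ 0 := fun h => hg (Subtype.ext h)
  obtain ⟨istar, histar⟩ : ∃ i, g.1 i ≠ 0 := by
    by_contra hno; push_neg at hno; exact hg1 (funext hno)
  obtain ⟨j, hj, hj0, hcof⟩ := exists_cofinal_chain istar
  have hprop : ∀ (v : ↥(invLim M φ)) (i i' : ι) (h : i ≤ i'),
      φ i i' h (v.1 i') = v.1 i :=
    fun v => (mem_invLim M φ _).mp v.2
  have hgj0 : g.1 (j 0) ≠ 0 := by
    intro h
    apply histar
    rw [← hprop g istar (j 0) hj0, h, map_zero]
  have hlift : ∀ (K : ℕ) (m0 : M (j K)), ∃ w : ↥(invLim M φ), w.1 (j K) = m0 :=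
    invLim_lift M φ hφid hφcomp hφsurj j hj hcof
  -- approximate divisibility
  have happrox : ∀ (u : ↥(invLim M φ)) (n : ℤ), n ≠ 0 → ∀ K : ℕ,
      ∃ w : ↥(invLim M φ), (n • w : ↥(invLim M φ)).1 (j K) = u.1 (j K) := by
    intro u n hn K
    obtain ⟨m0, hm0⟩ := hdiv (j K) n hn (u.1 (j K))
    obtain ⟨w, hw⟩ := hlift K m0
    refine ⟨w, ?_⟩
    have hco : (n • w : ↥(invLim M φ)).1 (j K) = n • (w.1 (j K)) := rfl
    rw [hco, hw]
    exact hm0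
  -- the recursive sequence t
  have hstep : ∀ (k : ℕ) (u : ↥(invLim M φ)), ∃ w : ↥(invLim M φ),
      (((k : ℤ)+1) • w : ↥(invLim M φ)).1 (j k) = u.1 (j k) :=
    fun k u => happrox u ((k : ℤ)+1) (by exact_mod_cast Nat.succ_ne_zero k) k
  let t : ℕ → ↥(invLim M φ) := fun k => Nat.rec g (fun k tk => Classical.choose (hstep k tk)) k
  have ht : ∀ k : ℕ, (((k : ℤ)+1) • t (k+1) : ↥(invLim M φ)).1 (j k) = (t k).1 (j k) := by
    intro k
    show (((k : ℤ)+1) • Classical.choose (hstep k (t k)) : ↥(invLim M φ)).1 (j k)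
      = (t k).1 (j k)
    exact Classical.choose_spec (hstep k (t k))
  -- stabilization
  have stab : ∀ (m k k' : ℕ), m ≤ k → k ≤ k' → ∀ i, i ≤ j k →
      ((dfac m k : ℤ) • t k : ↥(invLim M φ)).1 i
        = ((dfac m k' : ℤ) • t k' : ↥(invLim M φ)).1 i := by
    intro m k k' hmk hkk'
    induction k', hkk' using Nat.le_induction with
    | base => intro i _; rfl
    | succ k' hkk' ih =>
      intro i hi
      have hmk' : m ≤ k' := hmk.trans hkk'
      have hik' : i ≤ j k' := hi.trans (hj hkk')
      have hval : (((k' : ℤ)+1) • t (k'+1) : ↥(invLim M φ)).1 i = (t k').1 i := by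
        rw [← hprop (((k' : ℤ)+1) • t (k'+1)) i (j k') hik',
          ← hprop (t k') i (j k') hik', ht k']
      have hcast : (dfac m (k'+1) : ℤ) = (dfac m k' : ℤ) * ((k' : ℤ)+1) := by
        rw [dfac_succ_top hmk']; push_cast; ring
      calc ((dfac m k : ℤ) • t k : ↥(invLim M φ)).1 i
          = ((dfac m k' : ℤ) • t k' : ↥(invLim M φ)).1 i := ih i hi
        _ = (dfac m k' : ℤ) • ((t k').1 i) := rfl
        _ = (dfac m k' : ℤ) • ((((k' : ℤ)+1) • t (k'+1) : ↥(invLim M φ)).1 i) := by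
            rw [hval]
        _ = ((dfac m k' : ℤ) * ((k' : ℤ)+1)) • ((t (k'+1)).1 i) := by
            rw [mul_smul]; rfl
        _ = ((dfac m (k'+1) : ℤ) • t (k'+1) : ↥(invLim M φ)).1 i := by
            rw [hcast]; rfl
  -- the divisible chain x
  let cix : ι → ℕ := fun i => Classical.choose (hcof i)
  have hcix : ∀ i, i ≤ j (cix i) := fun i => Classical.choose_spec (hcof i)
  let N : ℕ → ι → ℕ := fun m i => max m (cix i)
  let xfam : ℕ → ∀ i, M i := fun m i =>
    ((dfac m (N m i) : ℤ) • t (N m i) : ↥(invLim M φ)).1 i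
  have hxf : ∀ (m k : ℕ) (i : ι), m ≤ k → i ≤ j k →
      xfam m i = ((dfac m k : ℤ) • t k : ↥(invLim M φ)).1 i := by
    intro m k i hmk hik
    have h1 : i ≤ j (N m i) := (hcix i).trans (hj (le_max_right _ _))
    have e1 := stab m (N m i) (max (N m i) k) (le_max_left _ _) (le_max_left _ _) i h1
    have e2 := stab m k (max (N m i) k) hmk (le_max_right _ _) i hik
    exact e1.trans e2.symm
  have hxmem : ∀ m, xfam m ∈ invLim M φ := by
    intro m
    rw [mem_invLim]
    intro i i' hii'
    have hms : m ≤ max (N m i) (N m i') := le_trans (le_max_left _ _) (le_max_left _ _)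
    have hi : i ≤ j (max (N m i) (N m i')) :=
      (hcix i).trans (hj (le_trans (le_max_right _ _) (le_max_left _ _)))
    have hi' : i' ≤ j (max (N m i) (N m i')) :=
      (hcix i').trans (hj (le_trans (le_max_right _ _) (le_max_right _ _)))
    rw [hxf m (max (N m i) (N m i')) i hms hi, hxf m (max (N m i) (N m i')) i' hms hi']
    exact hprop _ i i' hii'
  let x : ℕ → ↥(invLim M φ) := fun m => ⟨xfam m, hxmem m⟩
  have hxcoord : ∀ m i, (x m).1 i = xfam m i := fun m i => rfl
  have hxsucc : ∀ m : ℕ, ((m : ℤ)+1) • x (m+1) = x m := by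
    intro m
    apply Subtype.ext; funext i
    have h1 : i ≤ j (N (m+1) i) := (hcix i).trans (hj (le_max_right _ _))
    have hm1k : m + 1 ≤ N (m+1) i := le_max_left _ _
    have hbot : ((m+1) * dfac (m+1) (N (m+1) i) : ℕ) = dfac m (N (m+1) i) :=
      dfac_succ_bot (lt_of_lt_of_le (Nat.lt_succ_self m) hm1k)
    calc (((m : ℤ)+1) • x (m+1) : ↥(invLim M φ)).1 i
        = ((m : ℤ)+1) • (xfam (m+1) i) := rfl
      _ = ((m : ℤ)+1) • (((dfac (m+1) (N (m+1) i) : ℤ) • t (N (m+1) i)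
            : ↥(invLim M φ)).1 i) := by rw [hxf (m+1) (N (m+1) i) i hm1k h1]
      _ = (((m : ℤ)+1) * (dfac (m+1) (N (m+1) i) : ℤ)) • ((t (N (m+1) i)).1 i) := by
          rw [mul_smul]; rfl
      _ = ((dfac m (N (m+1) i) : ℤ)) • ((t (N (m+1) i)).1 i) := by
          rw [show ((m : ℤ)+1) * (dfac (m+1) (N (m+1) i) : ℤ) = (dfac m (N (m+1) i) : ℤ) by
            rw [← hbot]; push_cast; ring]
      _ = ((dfac m (N (m+1) i) : ℤ) • t (N (m+1) i) : ↥(invLim M φ)).1 i := rfl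
      _ = xfam m i := (hxf m (N (m+1) i) i (by omega) h1).symm
  have hx0ne : x 0 ≠ 0 := by
    intro h
    have h0 : xfam 0 (j 0) = 0 := by
      have := congrArg (fun v : ↥(invLim M φ) => v.1 (j 0)) h
      exact this
    have e : xfam 0 (j 0) = ((dfac 0 0 : ℤ) • t 0 : ↥(invLim M φ)).1 (j 0) :=
      hxf 0 0 (j 0) le_rfl le_rfl
    rw [dfac_self] at e
    apply hgj0
    have ht0 : (((1 : ℕ) : ℤ) • t 0 : ↥(invLim M φ)) = g := by
      rw [Nat.cast_one, one_smul]; rfl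
    rw [ht0] at e
    rw [← e]
    exact h0
  have hxrel : ∀ m k, m ≤ k → (dfac m k : ℤ) • x k = x m := by
    intro m k h
    induction k, h using Nat.le_induction with
    | base => rw [dfac_self, Nat.cast_one, one_smul]
    | succ k hk ih =>
      have hcast : (dfac m (k+1) : ℤ) = (dfac m k : ℤ) * ((k : ℤ)+1) := by
        rw [dfac_succ_top hk]; push_cast; ring
      rw [hcast, mul_smul, hxsucc k, ih]
  let D : AddSubgroup ↥(invLim M φ) :=
    { carrier := {v | ∃ (cc : ℤ) (m : ℕ), v = cc • x m}
      zero_mem' := ⟨0, 0, by simp⟩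
      add_mem' := by
        rintro a b ⟨ca, ma, rfl⟩ ⟨cb, mb, rfl⟩
        refine ⟨ca * (dfac ma (max ma mb) : ℤ) + cb * (dfac mb (max ma mb) : ℤ),
          max ma mb, ?_⟩
        rw [← hxrel ma (max ma mb) (le_max_left _ _), ← hxrel mb (max ma mb) (le_max_right _ _),
          add_smul, mul_smul, mul_smul]
      neg_mem' := by
        rintro a ⟨ca, ma, rfl⟩
        exact ⟨-ca, ma, by simp⟩ }
  have hmemD : ∀ v, v ∈ D ↔ ∃ (cc : ℤ) (m : ℕ), v = cc • x m := fun v => Iff.rfl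
  refine ⟨⟨D, ?_, ?_⟩, ?_⟩
  · -- D ≠ ⊥
    intro hbot
    have hx0D : x 0 ∈ D := (hmemD _).mpr ⟨1, 0, (one_smul ℤ _).symm⟩
    rw [hbot, AddSubgroup.mem_bot] at hx0D
    exact hx0ne hx0D
  · -- divisibility
    intro n hn v hv
    obtain ⟨cc, m, rfl⟩ := (hmemD _).mp hv
    have hr : n.natAbs ≠ 0 := Int.natAbs_ne_zero.mpr hn
    have hdvd : n ∣ (dfac m (m + n.natAbs) : ℤ) := by
      have h1 : ((n.natAbs : ℕ) : ℤ) ∣ (dfac m (m + n.natAbs) : ℤ) :=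
        Int.natCast_dvd_natCast.mpr (dvd_dfac m hr)
      exact Int.natAbs_dvd.mp h1
    obtain ⟨q, hq⟩ := hdvd
    refine ⟨(cc * q) • x (m + n.natAbs), (hmemD _).mpr ⟨cc * q, m + n.natAbs, rfl⟩, ?_⟩
    rw [smul_smul, show n * (cc * q) = cc * (n * q) by ring, mul_smul, ← hq,
      hxrel m (m + n.natAbs) (Nat.le_add_right _ _)]
  · -- not finitely generated
    intro hFG
    obtain ⟨a, ya, hya⟩ := hterm
    have hsurj_a : Function.Surjective (fun w : ↥(invLim M φ) => w.1 a) := by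
      intro mv
      obtain ⟨ka, hka⟩ := hcof a
      obtain ⟨mm, hmm⟩ := hφsurj a (j ka) hka mv
      obtain ⟨w, hw⟩ := hlift ka mm
      refine ⟨w, ?_⟩
      show w.1 a = mv
      rw [← hprop w a (j ka) hka, hw]
      exact hmm
    let ev : ↥(invLim M φ) →+ M a :=
      { toFun := fun w => w.1 a
        map_zero' := rfl
        map_add' := fun _ _ => rfl }
    have hMaFG : AddGroup.FG (M a) := AddGroup.fg_of_surjective (f := ev) hsurj_a
    exact not_addGroupFG_of_divisible (hdiv a) ya hya hMaFG
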